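/- Let T = (t_{i−j})_{i,j=0}^{n−1} be an invertible Toeplitz matrix over a field K, and let T̃(x) = Σ_{i=0}^{2n−1} t̃_i x^i with t̃_i = t_i for i < n and t̃_i = t_{i−2n} for i ≥ n. Then the only syzygy (p,q,r) ∈ K[x]^3 with deg p, deg q, deg r ≤ n−1 satisfying T̃(x)·p(x) + x^n·q(x) + (x^{2n}−1)·r(x) = 0 is (0,0,0). -/

import Mathlib

open Polynomial Finset

/-- The polynomial `T̃(x) = Σ_{i=0}^{2n-1} t̃_i x^i`, with `t̃_i = t_i` for `i < n`
and `t̃_i = t_{i-2n}` for `i ≥ n`, associated to the Toeplitz matrix with entries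
`t_{i-j}`. -/
noncomputable def Ttilde {K : Type*} [Field K] (n : ℕ) (t : ℤ → K) : Polynomial K :=
  ∑ i ∈ Finset.range (2 * n),
    C (if i < n then t i else t ((i : ℤ) - 2 * n)) * X ^ i

/-- If the Toeplitz matrix `T = (t_{i-j})` is invertible, then the only syzygy
`(p,q,r)` with `deg p, deg q, deg r ≤ n-1` of `(T̃(x), x^n, x^{2n}-1)` is `(0,0,0)`. -/
theorem stmt_2 {K : Type*} [Field K] (n : ℕ) (hn : 0 < n) (t : ℤ → K)
    (T : Matrix (Fin n) (Fin n) K) (hT : T = Matrix.of fun i j : Fin n => t ((i : ℤ) - (j : ℤ)))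
    (hTinv : IsUnit T)
    (p q r : Polynomial K)
    (hp : p.degree < n) (hq : q.degree < n) (hr : r.degree < n)
    (hsyz : Ttilde n t * p + X ^ n * q + (X ^ (2 * n) - 1) * r = 0) :
    p = 0 ∧ q = 0 ∧ r = 0 := by
  have hpc : ∀ j, n ≤ j → p.coeff j = 0 := fun j hj =>
    coeff_eq_zero_of_degree_lt (lt_of_lt_of_le hp (by exact_mod_cast Nat.cast_le.2 hj))
  have hqc : ∀ j, n ≤ j → q.coeff j = 0 := fun j hj =>
    coeff_eq_zero_of_degree_lt (lt_of_lt_of_le hq (by exact_mod_cast Nat.cast_le.2 hj))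
  have hrc : ∀ j, n ≤ j → r.coeff j = 0 := fun j hj =>
    coeff_eq_zero_of_degree_lt (lt_of_lt_of_le hr (by exact_mod_cast Nat.cast_le.2 hj))
  have hTc : ∀ i : ℕ, (Ttilde n t).coeff i =
      if i < 2 * n then (if i < n then t i else t ((i : ℤ) - 2 * n)) else 0 := by
    intro i
    simp only [Ttilde, finset_sum_coeff, coeff_C_mul, coeff_X_pow, mul_ite, mul_one, mul_zero]
    rw [Finset.sum_ite_eq (Finset.range (2*n)) i]
    simp [Finset.mem_range]
  -- key: T p = 0 coefficientwise
  have key : ∀ k : ℕ, k < n → ∑ j ∈ range n, t ((k:ℤ) - j) * p.coeff j = 0 := by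
    intro k hk
    have hco : ∀ m : ℕ, (Ttilde n t * p + X ^ n * q + (X ^ (2 * n) - 1) * r).coeff m = 0 := by
      intro m; rw [hsyz]; simp
    have e1 := hco k
    have e2 := hco (k + 2 * n)
    -- simplify e1
    have hx1 : (X ^ n * q).coeff k = 0 := by
      rw [coeff_X_pow_mul']   -- maybe name differs
      simp [Nat.not_le.2 hk]
    have hx2 : ((X ^ (2 * n) - 1) * r).coeff k = -r.coeff k := by
      rw [sub_mul, one_mul, coeff_sub, (commute_X_pow r (2*n)).eq, coeff_mul_X_pow']
      have : ¬ 2 * n ≤ k := by omega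
      simp [this]
    have hx3 : (X ^ n * q).coeff (k + 2 * n) = 0 := by
      rw [coeff_X_pow_mul']
      have : n ≤ k + 2 * n := by omega
      simp [this, hqc (k + 2*n - n) (by omega)]
    have hx4 : ((X ^ (2 * n) - 1) * r).coeff (k + 2 * n) = r.coeff k := by
      rw [sub_mul, one_mul, coeff_sub, (commute_X_pow r (2*n)).eq, coeff_mul_X_pow']
      have h2 : 2 * n ≤ k + 2 * n := by omega
      simp [h2, hrc (k + 2*n) (by omega)]
    rw [coeff_add, coeff_add, hx1, hx2] at e1
    rw [coeff_add, coeff_add, hx3, hx4] at e2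
    -- e1 : (T̃ p).coeff k + 0 + (- r.coeff k) = 0
    -- e2 : (T̃ p).coeff (k+2n) + 0 + r.coeff k = 0
    have esum : (Ttilde n t * p).coeff k + (Ttilde n t * p).coeff (k + 2 * n) = 0 := by
      linear_combination e1 + e2
    -- compute the two coefficients as sums
    have c1 : (Ttilde n t * p).coeff k = ∑ j ∈ range (k+1), t ((k:ℤ) - j) * p.coeff j := by
      rw [mul_comm, coeff_mul, Finset.Nat.sum_antidiagonal_eq_sum_range_succ_mk]
      apply Finset.sum_congr rfl
      intro j hj
      rw [Finset.mem_range] at hj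
      rw [hTc]
      have h1 : k - j < 2 * n := by omega
      have h2 : k - j < n := by omega
      rw [if_pos h1, if_pos h2, mul_comm]
      congr 2
      push_cast [Nat.cast_sub (by omega : j ≤ k)]
      ring
    have c2 : (Ttilde n t * p).coeff (k + 2 * n) =
        ∑ j ∈ Ico (k+1) n, t ((k:ℤ) - j) * p.coeff j := by
      rw [mul_comm, coeff_mul, Finset.Nat.sum_antidiagonal_eq_sum_range_succ_mk]
      rw [← Finset.sum_subset (s₁ := Ico (k+1) n) (by intro x hx; rw [Finset.mem_Ico] at hx; rw [Finset.mem_range]; omega)]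
      · apply Finset.sum_congr rfl
        intro j hj
        rw [Finset.mem_Ico] at hj
        rw [hTc]
        have h1 : k + 2 * n - j < 2 * n := by omega
        have h2 : ¬ (k + 2 * n - j < n) := by omega
        rw [if_pos h1, if_neg h2, mul_comm]
        congr 2
        push_cast [Nat.cast_sub (by omega : j ≤ k + 2 * n)]
        ring
      · intro j hj hj'
        rw [Finset.mem_range] at hj
        rw [Finset.mem_Ico] at hj'
        rcases Nat.lt_or_ge j n with h | h
        · -- j ≤ k, so k + 2n - j ≥ 2n, Ttilde coeff = 0
          have hjk : j ≤ k := by omega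
          rw [hTc]
          have : ¬ (k + 2 * n - j < 2 * n) := by omega
          rw [if_neg this, mul_zero]
        · rw [hpc j h, zero_mul]
    rw [c1, c2] at esum
    rw [show range n = range (k+1) ∪ Ico (k+1) n by
      rw [Finset.range_eq_Ico, Finset.range_eq_Ico]
      exact (Finset.Ico_union_Ico_eq_Ico (a := 0) (b := k+1) (c := n) (by omega) (by omega)).symm]
    rw [Finset.sum_union (by
      rw [Finset.range_eq_Ico]; exact Finset.Ico_disjoint_Ico_consecutive 0 (k+1) n)]
    exact esum
  -- now p = 0
  have hp0 : p = 0 := by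
    obtain ⟨Tinv, hTl, _⟩ : ∃ B, B * T = 1 ∧ T * B = 1 := by
      rcases hTinv with ⟨u, rfl⟩
      exact ⟨↑u⁻¹, u.inv_mul, u.mul_inv⟩
    set v : Fin n → K := fun j => p.coeff j with hv
    have hmv : T.mulVec v = 0 := by
      funext i
      rw [hT]
      show ∑ j : Fin n, t ((i:ℤ) - (j:ℤ)) * v j = 0
      have := key i i.isLt
      rw [← Fin.sum_univ_eq_sum_range (fun j => t ((i:ℤ) - j) * p.coeff j) n] at this
      exact this
    have hv0 : v = 0 := by
      have : Tinv.mulVec (T.mulVec v) = v := by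
        rw [Matrix.mulVec_mulVec, hTl, Matrix.one_mulVec]
      rw [hmv, Matrix.mulVec_zero] at this
      exact this.symm
    ext j
    rcases Nat.lt_or_ge j n with h | h
    · have := congrFun hv0 ⟨j, h⟩
      simpa [hv] using this
    · simp [hpc j h]
  subst hp0
  rw [mul_zero, zero_add] at hsyz
  have hr0 : r = 0 := by
    ext k
    rcases Nat.lt_or_ge k n with h | h
    · have hco : (X ^ n * q + (X ^ (2 * n) - 1) * r).coeff k = 0 := by rw [hsyz]; simp
      rw [coeff_add, coeff_X_pow_mul', sub_mul, one_mul, coeff_sub,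
        (commute_X_pow r (2*n)).eq, coeff_mul_X_pow'] at hco
      have h1 : ¬ n ≤ k := by omega
      have h2 : ¬ 2 * n ≤ k := by omega
      rw [if_neg h1, if_neg h2] at hco
      simpa using hco
    · simp [hrc k h]
  subst hr0
  rw [mul_zero, add_zero] at hsyz
  have hq0 : q = 0 := by
    have := mul_eq_zero.1 hsyz
    rcases this with h | h
    · exact absurd h (pow_ne_zero n X_ne_zero)
    · exact h
  exact ⟨rfl, hq0, rfl⟩
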